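/- For the closed-chain run-length fixed-point counts: 𝔉c([k]) = 2 for every k ≥ 3 (the closed chain all of whose operators are equal has exactly two fixed points); 𝔉c([k, 1]) = 2 for every k ≥ 2; and 𝔉c([k_1, k_2]) = 3 for all k_1, k_2 ≥ 2. -/

import Mathlib

/-- The open-chain AND-OR network map determined by an operator list `ops`
(`true` = AND, `false` = OR), on `ops.length + 2` nodes. -/
def chainMap (ops : List Bool) (x : Fin (ops.length + 2) → Bool) :
    Fin (ops.length + 2) → Bool := fun i =>
  if h0 : (i : ℕ) = 0 then x ⟨1, by omega⟩
  else if hn : (i : ℕ) = ops.length + 1 then x ⟨ops.length, by omega⟩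
  else
    have hi : 1 ≤ (i : ℕ) ∧ (i : ℕ) ≤ ops.length := by
      have := i.isLt; omega
    if ops.get ⟨(i : ℕ) - 1, by omega⟩
    then x ⟨(i : ℕ) - 1, by omega⟩ && x ⟨(i : ℕ) + 1, by omega⟩
    else x ⟨(i : ℕ) - 1, by omega⟩ || x ⟨(i : ℕ) + 1, by omega⟩

/-- `F ops` is the number of fixed points of the open-chain AND-OR network. -/
noncomputable def F (ops : List Bool) : ℕ :=
  Nat.card {x : Fin (ops.length + 2) → Bool // chainMap ops x = x}

/-- Run-length encoding: block `j` (1-based) consists of `k_j` copies of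
`true` if `j` is odd and `false` if `j` is even. -/
def runOps : List ℕ → List Bool
  | [] => []
  | k :: t => List.replicate k true ++ (runOps t).map (fun b => !b)

/-- `Fr L` = 𝔉(L), the number of fixed points of the open-chain AND-OR
network with run-length list `L`. -/
noncomputable def Fr (L : List ℕ) : ℕ := F (runOps L)

/-- The closed-chain AND-OR network map on `ZMod n` determined by
`ops : ZMod n → Bool` (`true` = AND, `false` = OR). -/
def cycleMap {n : ℕ} (ops : ZMod n → Bool) (x : ZMod n → Bool) :
    ZMod n → Bool := fun i =>
  if ops i then x (i - 1) && x (i + 1) else x (i - 1) || x (i + 1)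

/-- `Fc ops` is the number of fixed points of the closed-chain AND-OR network. -/
noncomputable def Fc {n : ℕ} (ops : ZMod n → Bool) : ℕ :=
  Nat.card {x : ZMod n → Bool // cycleMap ops x = x}

/-- The cyclic operator assignment for run-length list `L`: going cyclically
from index `0`, a block of `k_j` consecutive values equal to `true` if `j` is
odd and `false` if `j` is even. -/
def cOps (L : List ℕ) : ZMod L.sum → Bool :=
  fun i => (runOps L).getD i.val false

/-- `Frc L` = 𝔉c(L), the number of fixed points of the closed-chain AND-OR
network with run-length list `L`. -/
noncomputable def Frc (L : List ℕ) : ℕ := Fc (cOps L)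

/-- closed-chain base cases: `𝔉c([k]) = 2` for `k ≥ 3`,
`𝔉c([k,1]) = 2` for `k ≥ 2`, `𝔉c([k₁,k₂]) = 3` for `k₁, k₂ ≥ 2`. -/
lemma const_fixed {n : ℕ} (ops : ZMod n → Bool) (b : Bool) :
    cycleMap ops (fun _ => b) = fun _ => b := by
  funext i; simp [cycleMap]

lemma fix_and {n : ℕ} {ops x} (h : cycleMap ops x = x) {i : ZMod n}
    (ho : ops i = true) (hx : x i = true) :
    x (i - 1) = true ∧ x (i + 1) = true := by
  have h' := congrFun h i
  simp [cycleMap, ho, hx] at h'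
  exact h'

lemma Fc_eq_ncard {n : ℕ} (ops : ZMod n → Bool) :
    Fc ops = {x : ZMod n → Bool | cycleMap ops x = x}.ncard := by
  rw [Fc, ← Nat.card_coe_set_eq]; rfl

lemma fix_or {n : ℕ} {ops x} (h : cycleMap ops x = x) {i : ZMod n}
    (ho : ops i = false) (hx : x i = false) :
    x (i - 1) = false ∧ x (i + 1) = false := by
  have h' := congrFun h i
  simp [cycleMap, ho, hx] at h'
  exact h'

lemma core3 (k₁ k₂ : ℕ) (h1 : 2 ≤ k₁) (h2 : 2 ≤ k₂) (n : ℕ) (hn : n = k₁ + k₂)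
    (ops : ZMod n → Bool) (hops : ∀ i, ops i = decide (i.val < k₁)) : Fc ops = 3 := by
  haveI : NeZero n := ⟨by omega⟩
  have hval : ∀ j : ℕ, j < n → ((j : ℕ) : ZMod n).val = j := fun j hj =>
    ZMod.val_cast_of_lt hj
  have hand : ∀ j : ℕ, j < k₁ → ops ((j : ℕ) : ZMod n) = true := by
    intro j hj
    rw [hops, hval j (by omega)]
    simpa using hj
  have hor : ∀ j : ℕ, k₁ ≤ j → j < n → ops ((j : ℕ) : ZMod n) = false := by
    intro j hj hj'
    rw [hops, hval j hj']
    simpa using (by omega : ¬ j < k₁)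
  have casts : ∀ j : ℕ, ((j : ℕ) : ZMod n) + 1 = ((j + 1 : ℕ) : ZMod n) := by
    intro j; push_cast; ring
  have castp : ∀ j : ℕ, ((j + 1 : ℕ) : ZMod n) - 1 = ((j : ℕ) : ZMod n) := by
    intro j; push_cast; ring
  have castm : ∀ j : ℕ, 1 ≤ j → ((j : ℕ) : ZMod n) - 1 = ((j - 1 : ℕ) : ZMod n) := by
    intro j hj
    conv_lhs => rw [show j = (j - 1) + 1 from by omega]
    rw [castp]
  -- propagation in the AND block
  have back : ∀ j : ℕ, j < k₁ → ∀ x, cycleMap ops x = x →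
      x ((j : ℕ) : ZMod n) = true → x 0 = true := by
    intro j
    induction j with
    | zero => intro _ x hx h0; simpa using h0
    | succ j ih =>
      intro hj x hx hxj
      have hb := (fix_and hx (hand (j+1) hj) hxj).1
      rw [castp j] at hb
      exact ih (by omega) x hx hb
  have fwd : ∀ x, cycleMap ops x = x → x 0 = true →
      ∀ j : ℕ, j ≤ k₁ → x ((j : ℕ) : ZMod n) = true := by
    intro x hx h0 j
    induction j with
    | zero => intro _; simpa using h0
    | succ j ih =>
      intro hj
      have h2' := (fix_and hx (hand j (by omega)) (ih (by omega))).2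
      rwa [casts j] at h2'
  -- propagation in the OR block
  have backO : ∀ d : ℕ, d < k₂ → ∀ x, cycleMap ops x = x →
      x (((k₁ + d : ℕ)) : ZMod n) = false → x ((k₁ : ℕ) : ZMod n) = false := by
    intro d
    induction d with
    | zero => intro _ x hx h0; simpa using h0
    | succ d ih =>
      intro hd x hx hxd
      have hb := (fix_or hx (hor (k₁ + d + 1) (by omega) (by omega)) (by
        rwa [show k₁ + (d + 1) = (k₁ + d) + 1 by ring] at hxd)).1
      rw [castp (k₁ + d)] at hb
      exact ih (by omega) x hx hb
  have fwdO : ∀ x, cycleMap ops x = x → x ((k₁ : ℕ) : ZMod n) = false →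
      ∀ d : ℕ, d ≤ k₂ → x (((k₁ + d : ℕ)) : ZMod n) = false := by
    intro x hx h0 d
    induction d with
    | zero => intro _; simpa using h0
    | succ d ih =>
      intro hd
      have h2' := (fix_or hx (hor (k₁ + d) (by omega) (by omega)) (ih (by omega))).2
      rw [casts (k₁ + d)] at h2'
      rwa [show k₁ + (d + 1) = (k₁ + d) + 1 by ring]
  -- the third fixed point
  set p : ZMod n → Bool := fun i => decide (k₁ ≤ i.val) with hp
  have hpi : ∀ i : ZMod n, p i = decide (k₁ ≤ i.val) := fun _ => rfl
  have hpcast : ∀ j : ℕ, j < n → p ((j : ℕ) : ZMod n) = decide (k₁ ≤ j) := by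
    intro j hj; rw [hpi, hval j hj]
  have hpfix : cycleMap ops p = p := by
    funext i
    have hiv : i.val < n := ZMod.val_lt i
    have hie : ((i.val : ℕ) : ZMod n) = i := by rw [ZMod.natCast_val, ZMod.cast_id]
    by_cases hA : i.val < k₁
    · -- AND node, p i = false
      have ho : ops i = true := by rw [hops]; simpa using hA
      have hpif : p i = false := by
        rw [hpi]; simpa using (by omega : ¬ k₁ ≤ i.val)
      simp only [cycleMap, ho, if_true, hpif]
      by_cases h0 : i.val = 0
      · have hi0 : i = 0 := by rw [← hie, h0]; simp
        have e1 : i + 1 = ((1 : ℕ) : ZMod n) := by rw [hi0]; simp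
        have hp1 : p (i + 1) = false := by
          rw [e1, hpcast 1 (by omega)]; simpa using (by omega : ¬ k₁ ≤ 1)
        rw [hp1, Bool.and_false]
      · have e1 : i - 1 = ((i.val - 1 : ℕ) : ZMod n) := by
          conv_lhs => rw [← hie]
          exact castm i.val (by omega)
        have hp1 : p (i - 1) = false := by
          rw [e1, hpcast _ (by omega)]; simpa using (by omega : ¬ k₁ ≤ i.val - 1)
        rw [hp1, Bool.false_and]
    · -- OR node, p i = true
      have ho : ops i = false := by rw [hops]; simpa using hA
      have hpit : p i = true := by
        rw [hpi]; simpa using (by omega : k₁ ≤ i.val)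
      simp only [cycleMap, ho, Bool.false_eq_true, if_false, hpit]
      by_cases hlast : i.val = n - 1
      · have e1 : i - 1 = ((n - 2 : ℕ) : ZMod n) := by
          rw [← hie, hlast, castm (n - 1) (by omega)]
          congr 1
        have hp1 : p (i - 1) = true := by
          rw [e1, hpcast _ (by omega)]; simpa using (by omega : k₁ ≤ n - 2)
        rw [hp1, Bool.true_or]
      · have e1 : i + 1 = ((i.val + 1 : ℕ) : ZMod n) := by
          conv_lhs => rw [← hie]
          rw [casts]
        have hp1 : p (i + 1) = true := by
          rw [e1, hpcast _ (by omega)]; simpa using (by omega : k₁ ≤ i.val + 1)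
        rw [hp1, Bool.or_true]
  -- classification of fixed points
  have hset : {x : ZMod n → Bool | cycleMap ops x = x}
      = {(fun _ => false), (fun _ => true), p} := by
    ext x
    simp only [Set.mem_setOf_eq, Set.mem_insert_iff, Set.mem_singleton_iff]
    constructor
    · intro hx
      by_cases hA : ∃ j : ℕ, j < k₁ ∧ x ((j : ℕ) : ZMod n) = true
      · obtain ⟨j, hj, hxj⟩ := hA
        have h0 : x 0 = true := back j hj x hx hxj
        by_cases hO : ∃ d : ℕ, d < k₂ ∧ x (((k₁ + d : ℕ)) : ZMod n) = false
        · obtain ⟨d, hd, hxd⟩ := hO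
          have hf : x ((k₁ : ℕ) : ZMod n) = false := backO d hd x hx hxd
          have ht : x ((k₁ : ℕ) : ZMod n) = true := fwd x hx h0 k₁ le_rfl
          rw [ht] at hf; exact absurd hf (by simp)
        · right; left
          push_neg at hO
          funext i
          have hiv : i.val < n := ZMod.val_lt i
          have hie : ((i.val : ℕ) : ZMod n) = i := by
            rw [ZMod.natCast_val, ZMod.cast_id]
          by_cases hik : i.val < k₁
          · rw [← hie]; exact fwd x hx h0 i.val (by omega)
          · have h' := hO (i.val - k₁) (by omega)
            rw [show k₁ + (i.val - k₁) = i.val by omega, hie] at h'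
            simpa using h'
      · push_neg at hA
        have hAf : ∀ j : ℕ, j < k₁ → x ((j : ℕ) : ZMod n) = false := by
          intro j hj; simpa using hA j hj
        by_cases hO : ∃ d : ℕ, d < k₂ ∧ x (((k₁ + d : ℕ)) : ZMod n) = false
        · left
          obtain ⟨d, hd, hxd⟩ := hO
          have hf : x ((k₁ : ℕ) : ZMod n) = false := backO d hd x hx hxd
          funext i
          have hiv : i.val < n := ZMod.val_lt i
          have hie : ((i.val : ℕ) : ZMod n) = i := by
            rw [ZMod.natCast_val, ZMod.cast_id]
          by_cases hik : i.val < k₁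
          · rw [← hie]; exact hAf i.val hik
          · have h' := fwdO x hx hf (i.val - k₁) (by omega)
            rwa [show k₁ + (i.val - k₁) = i.val by omega, hie] at h'
        · right; right
          push_neg at hO
          funext i
          have hiv : i.val < n := ZMod.val_lt i
          have hie : ((i.val : ℕ) : ZMod n) = i := by
            rw [ZMod.natCast_val, ZMod.cast_id]
          by_cases hik : i.val < k₁
          · rw [← hie, hAf i.val hik, hpcast _ (by omega)]
            symm
            simpa using (by omega : ¬ k₁ ≤ i.val)
          · have h' := hO (i.val - k₁) (by omega)
            rw [show k₁ + (i.val - k₁) = i.val by omega, hie] at h'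
            simp only [Bool.not_eq_false] at h'
            rw [h', hpi]
            symm
            simpa using (by omega : k₁ ≤ i.val)
    · rintro (rfl | rfl | rfl)
      · exact const_fixed ops _
      · exact const_fixed ops _
      · exact hpfix
  -- distinctness and counting
  have hk1v : p ((k₁ : ℕ) : ZMod n) = true := by
    rw [hpcast _ (by omega)]; simp
  have hne1 : (fun _ => false : ZMod n → Bool) ≠ fun _ => true := by
    intro h; have := congrFun h 0; simp at this
  have hne2 : (fun _ => false : ZMod n → Bool) ≠ p := by
    intro h; have := congrFun h ((k₁ : ℕ) : ZMod n); rw [hk1v] at this; simp at this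
  have hne3 : (fun _ => true : ZMod n → Bool) ≠ p := by
    intro h
    have h' := (congrFun h 0).symm
    rw [hpi] at h'
    simp only [ZMod.val_zero, decide_eq_true_eq] at h'
    omega
  rw [Fc_eq_ncard, hset,
    Set.ncard_insert_of_notMem (by simp [hne1, hne2])
      ((Set.finite_singleton p).insert _),
    Set.ncard_pair hne3]

lemma core1 (n : ℕ) (hn : 3 ≤ n) (ops : ZMod n → Bool) (hops : ∀ i, ops i = true) :
    Fc ops = 2 := by
  haveI : NeZero n := ⟨by omega⟩
  have hset : {x : ZMod n → Bool | cycleMap ops x = x}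
      = {(fun _ => false), (fun _ => true)} := by
    ext x
    simp only [Set.mem_setOf_eq, Set.mem_insert_iff, Set.mem_singleton_iff]
    constructor
    · intro hx
      by_cases hex : ∃ m, x m = true
      · right
        obtain ⟨m, hm⟩ := hex
        have H : ∀ j : ℕ, x (m + (j : ZMod n)) = true := by
          intro j; induction j with
          | zero => simpa using hm
          | succ j ih =>
            have h2 := (fix_and hx (hops _) ih).2
            have e1 : (m + (j : ZMod n)) + 1 = m + ((j + 1 : ℕ) : ZMod n) := by
              push_cast; ring
            rwa [e1] at h2
        funext i
        have e2 : i = m + (((i - m).val : ℕ) : ZMod n) := by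
          rw [ZMod.natCast_val, ZMod.cast_id]; ring
        rw [e2]; exact H _
      · left
        funext i
        have := not_exists.mp hex i
        simpa using this
    · rintro (rfl | rfl) <;> exact const_fixed ops _
  rw [Fc_eq_ncard, hset, Set.ncard_pair]
  intro h
  have := congrFun h 0
  simp at this

lemma core2 (k : ℕ) (hk : 2 ≤ k) (n : ℕ) (hn : n = k + 1) (ops : ZMod n → Bool)
    (hops : ∀ i, ops i = decide (i.val < k)) : Fc ops = 2 := by
  subst hn
  have hand : ∀ j : ℕ, j < k → ops ((j : ℕ) : ZMod (k+1)) = true := by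
    intro j hj
    rw [hops, ZMod.val_cast_of_lt (by omega : j < k + 1)]
    simpa using hj
  have back : ∀ j : ℕ, j < k → ∀ x, cycleMap ops x = x →
      x ((j : ℕ) : ZMod (k+1)) = true → x 0 = true := by
    intro j
    induction j with
    | zero => intro _ x hx h0; simpa using h0
    | succ j ih =>
      intro hj x hx hxj
      have h1 := (fix_and hx (hand (j+1) hj) hxj).1
      have e1 : ((j + 1 : ℕ) : ZMod (k+1)) - 1 = ((j : ℕ) : ZMod (k+1)) := by
        push_cast; ring
      rw [e1] at h1
      exact ih (by omega) x hx h1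
  have fwd : ∀ x, cycleMap ops x = x → x 0 = true →
      ∀ j : ℕ, j ≤ k → x ((j : ℕ) : ZMod (k+1)) = true := by
    intro x hx h0 j
    induction j with
    | zero => intro _; simpa using h0
    | succ j ih =>
      intro hj
      have h2 := (fix_and hx (hand j (by omega)) (ih (by omega))).2
      have e1 : ((j : ℕ) : ZMod (k+1)) + 1 = ((j + 1 : ℕ) : ZMod (k+1)) := by
        push_cast; ring
      rwa [e1] at h2
  have hset : {x : ZMod (k+1) → Bool | cycleMap ops x = x}
      = {(fun _ => false), (fun _ => true)} := by
    ext x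
    simp only [Set.mem_setOf_eq, Set.mem_insert_iff, Set.mem_singleton_iff]
    constructor
    · intro hx
      by_cases hex : ∃ m, x m = true
      · right
        obtain ⟨m, hm⟩ := hex
        have hmv : m.val < k + 1 := ZMod.val_lt m
        have hme : ((m.val : ℕ) : ZMod (k+1)) = m := by
          rw [ZMod.natCast_val, ZMod.cast_id]
        have h0 : x 0 = true := by
          by_cases hmk : m.val < k
          · exact back m.val hmk x hx (by rwa [hme])
          · have hmk' : m.val = k := by omega
            have hopsm : ops m = false := by rw [hops, hmk']; simp
            have h' := congrFun hx m
            simp [cycleMap, hopsm, hm] at h'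
            have e1 : m - 1 = ((k - 1 : ℕ) : ZMod (k+1)) := by
              rw [← hme, hmk', Nat.cast_sub (by omega : 1 ≤ k)]
              push_cast; ring
            have e2 : m + 1 = 0 := by
              rw [← hme, hmk']
              have : ((k : ℕ) : ZMod (k+1)) + 1 = ((k + 1 : ℕ) : ZMod (k+1)) := by
                push_cast; ring
              rw [this, ZMod.natCast_self]
            rcases h' with h1 | h1
            · exact back (k-1) (by omega) x hx (by rwa [e1] at h1)
            · rwa [e2] at h1
        funext i
        have h3 : x ((i.val : ℕ) : ZMod (k+1)) = true :=
          fwd x hx h0 i.val (by have := ZMod.val_lt i; omega)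
        rwa [ZMod.natCast_val, ZMod.cast_id] at h3
      · left
        funext i
        have := not_exists.mp hex i
        simpa using this
    · rintro (rfl | rfl) <;> exact const_fixed ops _
  rw [Fc_eq_ncard, hset, Set.ncard_pair]
  intro h
  have := congrFun h 0
  simp at this


theorem andor_closed_chain_base_cases :
    (∀ k : ℕ, 3 ≤ k → Frc [k] = 2) ∧
    (∀ k : ℕ, 2 ≤ k → Frc [k, 1] = 2) ∧
    (∀ k₁ k₂ : ℕ, 2 ≤ k₁ → 2 ≤ k₂ → Frc [k₁, k₂] = 3) := by
  refine ⟨?_, ?_, ?_⟩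
  · intro k hk
    have hs : [k].sum = k := by simp
    haveI : NeZero ([k].sum) := ⟨by rw [hs]; omega⟩
    refine core1 _ (by rw [hs]; omega) (cOps [k]) ?_
    intro i
    have hv : i.val < k := by have := ZMod.val_lt i; omega
    have hrun : runOps [k] = List.replicate k true := by simp [runOps]
    simp only [cOps, hrun]
    rw [List.getD_eq_getElem _ _ (by simpa using hv), List.getElem_replicate]
  · intro k hk
    have hs : [k, 1].sum = k + 1 := by simp
    haveI : NeZero ([k, 1].sum) := ⟨by rw [hs]; omega⟩
    refine core2 k hk _ hs (cOps [k, 1]) ?_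
    intro i
    have hv : i.val < k + 1 := by have := ZMod.val_lt i; omega
    have hrun : runOps [k, 1] = List.replicate k true ++ [false] := by
      simp [runOps]
    simp only [cOps, hrun]
    by_cases h : i.val < k
    · rw [List.getD_append _ _ _ _ (by simpa using h),
        List.getD_eq_getElem _ _ (by simpa using h), List.getElem_replicate]
      exact (decide_eq_true h).symm
    · have hk' : i.val = k := by omega
      rw [List.getD_eq_getElem _ _ (by simp at hv ⊢; omega),
        List.getElem_append_right (by simpa using h)]
      simp at hk' ⊢; simp [hk']
  · intro k₁ k₂ hk1 hk2
    have hs : [k₁, k₂].sum = k₁ + k₂ := by simp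
    haveI : NeZero ([k₁, k₂].sum) := ⟨by rw [hs]; omega⟩
    refine core3 k₁ k₂ hk1 hk2 _ hs (cOps [k₁, k₂]) ?_
    intro i
    have hv : i.val < k₁ + k₂ := by have := ZMod.val_lt i; omega
    have hrun : runOps [k₁, k₂] = List.replicate k₁ true ++ List.replicate k₂ false := by
      simp [runOps]
    simp only [cOps, hrun]
    by_cases h : i.val < k₁
    · rw [List.getD_append _ _ _ _ (by simpa using h),
        List.getD_eq_getElem _ _ (by simpa using h), List.getElem_replicate]
      exact (decide_eq_true h).symm
    · rw [List.getD_eq_getElem _ _ (by simp at hv ⊢; omega),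
        List.getElem_append_right (by simpa using h), List.getElem_replicate]
      exact (decide_eq_false h).symm
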